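/- For d ∈ ℕ and 0 < η ≤ 2^{−d}, let J_η = {x ∈ [0,1]^d : ∏_{j=1}^d min(x_j, 1−x_j) ≥ η}. Then the Lebesgue measure of [0,1]^d \ J_η equals 2^d η ∑_{ℓ=0}^{d−1} (log(2^{−d}/η))^ℓ / ℓ!. -/

import Mathlib

open MeasureTheory Set

lemma piRestrict (d : ℕ) {s : Set ℝ} (hs : MeasurableSet s) :
    (volume : Measure (Fin d → ℝ)).restrict (Set.pi Set.univ fun _ => s)
      = Measure.pi fun _ : Fin d => volume.restrict s := by
  refine (Measure.pi_eq fun t ht => ?_).symm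
  rw [Measure.restrict_apply (MeasurableSet.univ_pi ht), ← Set.pi_inter_distrib,
    volume_pi_pi]
  exact Finset.prod_congr rfl fun i _ => (Measure.restrict_apply (ht i)).symm

lemma tentMP : MeasurePreserving (fun x : ℝ => 2 * min x (1 - x))
    (volume.restrict (Set.Ioc 0 1)) (volume.restrict (Set.Ioc 0 1)) := by
  have hmeas : Measurable (fun x : ℝ => 2 * min x (1 - x)) := by fun_prop
  refine ⟨hmeas, ?_⟩
  have hsplit : volume.restrict (Set.Ioc (0:ℝ) 1)
      = volume.restrict (Set.Ioc 0 2⁻¹) + volume.restrict (Set.Ioc 2⁻¹ 1) := by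
    rw [← Measure.restrict_union ((Set.Ioc_disjoint_Ioc_of_le le_rfl)) measurableSet_Ioc,
      Set.Ioc_union_Ioc_eq_Ioc (by norm_num) (by norm_num)]
  rw [hsplit, Measure.map_add _ _ hmeas]
  have h1 : Measure.map (fun x : ℝ => 2 * min x (1 - x)) (volume.restrict (Set.Ioc 0 2⁻¹))
      = ENNReal.ofReal 2⁻¹ • volume.restrict (Set.Ioc 0 1) := by
    have he : (fun x : ℝ => 2 * min x (1 - x)) =ᵐ[volume.restrict (Set.Ioc 0 2⁻¹)]
        (fun x : ℝ => 2 * x) := by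
      refine (ae_restrict_iff' measurableSet_Ioc).mpr (ae_of_all _ fun x hx => ?_)
      show 2 * min x (1 - x) = 2 * x
      rw [min_eq_left (by linarith [hx.2] : x ≤ 1 - x)]
    have hpre : Set.Ioc (0:ℝ) 2⁻¹ = (fun x : ℝ => 2 * x) ⁻¹' Set.Ioc 0 1 := by
      ext x; simp only [Set.mem_Ioc, Set.mem_preimage]; constructor <;> intro h <;>
        constructor <;> linarith [h.1, h.2]
    rw [Measure.map_congr he, hpre, ← Measure.restrict_map (measurable_const_mul 2)
      measurableSet_Ioc, Real.map_volume_mul_left (two_ne_zero), Measure.restrict_smul]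
    norm_num [abs_of_nonneg]
  have h2 : Measure.map (fun x : ℝ => 2 * min x (1 - x)) (volume.restrict (Set.Ioc 2⁻¹ 1))
      = ENNReal.ofReal 2⁻¹ • volume.restrict (Set.Ioc 0 1) := by
    have he : (fun x : ℝ => 2 * min x (1 - x)) =ᵐ[volume.restrict (Set.Ioc 2⁻¹ 1)]
        (fun x : ℝ => 2 + (-2) * x) := by
      refine (ae_restrict_iff' measurableSet_Ioc).mpr (ae_of_all _ fun x hx => ?_)
      show 2 * min x (1 - x) = 2 + (-2) * x
      rw [min_eq_right (by linarith [hx.1] : 1 - x ≤ x)]; ring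
    have hψ : Measurable (fun x : ℝ => 2 + (-2) * x) := by fun_prop
    have hpre : Set.Ioc (2⁻¹:ℝ) 1 = (fun x : ℝ => 2 + (-2) * x) ⁻¹' Set.Ico 0 1 := by
      ext x; simp only [Set.mem_Ioc, Set.mem_preimage, Set.mem_Ico]; constructor <;>
        intro h <;> constructor <;> linarith [h.1, h.2]
    have hm : Measure.map (fun x : ℝ => 2 + (-2) * x) volume
        = ENNReal.ofReal 2⁻¹ • volume := by
      have : (fun x : ℝ => 2 + (-2) * x) = (fun y : ℝ => 2 + y) ∘ (fun x : ℝ => (-2) * x) := rfl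
      rw [this, ← Measure.map_map (measurable_const_add 2) (measurable_const_mul (-2)),
        Real.map_volume_mul_left (by norm_num : (-2:ℝ) ≠ 0), Measure.map_smul,
        map_add_left_eq_self]
      norm_num [abs_of_nonneg]
    rw [Measure.map_congr he, hpre, ← Measure.restrict_map hψ measurableSet_Ico, hm,
      Measure.restrict_smul, Measure.restrict_congr_set Ico_ae_eq_Ioc]
  rw [h1, h2, ← add_smul, ← ENNReal.ofReal_add (by norm_num) (by norm_num),
    show (2⁻¹ + 2⁻¹ : ℝ) = 1 by norm_num, ENNReal.ofReal_one, one_smul]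
  exact hsplit

lemma fullMeasure (d : ℕ) {s : ℝ} (hs : 1 < s) :
    Measure.pi (fun _ : Fin d => volume.restrict (Set.Ioc 0 1))
      {y : Fin d → ℝ | ∏ j, y j < s} = 1 := by
  set μ := Measure.pi (fun _ : Fin d => volume.restrict (Set.Ioc (0:ℝ) 1)) with hμ
  have hmp : Measurable (fun y : Fin d → ℝ => ∏ j, y j) :=
    Finset.measurable_prod _ fun i _ => measurable_pi_apply i
  have hS : MeasurableSet {y : Fin d → ℝ | ∏ j, y j < s} :=
    measurableSet_lt hmp measurable_const
  have huniv : μ Set.univ = 1 := by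
    rw [hμ, Measure.pi_univ]
    simp [Real.volume_Ioc]
  have hcube : μ (Set.pi Set.univ fun _ : Fin d => Set.Ioc (0:ℝ) 1) = 1 := by
    rw [hμ, Measure.pi_pi]
    simp [Real.volume_Ioc]
  have hc : μ {y : Fin d → ℝ | ∏ j, y j < s}ᶜ = 0 := by
    have hsub : {y : Fin d → ℝ | ∏ j, y j < s}ᶜ ⊆
        (Set.pi Set.univ fun _ : Fin d => Set.Ioc (0:ℝ) 1)ᶜ := by
      intro y hy hyc
      rw [Set.mem_univ_pi] at hyc
      refine hy ?_
      have : ∏ j, y j ≤ 1 :=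
        Finset.prod_le_one (fun j _ => (hyc j).1.le) (fun j _ => (hyc j).2)
      exact lt_of_le_of_lt this hs
    refine le_antisymm (le_trans (measure_mono hsub) ?_) zero_le
    rw [measure_compl (MeasurableSet.univ_pi fun _ => measurableSet_Ioc)
      (by rw [hcube]; exact ENNReal.one_ne_top), huniv, hcube, tsub_self]
  have := measure_add_measure_compl (μ := μ) hS
  rw [hc, add_zero, huniv] at this
  exact this

lemma integralTerm (t : ℝ) (ht : 0 < t) (ht' : t ≤ 1) (l : ℕ) :
    ∫ x in t..1, (t / x) * ((Real.log x - Real.log t) ^ l / Nat.factorial l)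
      = t * Real.log t⁻¹ ^ (l + 1) / Nat.factorial (l + 1) := by
  have hne : ∀ x ∈ Set.uIcc t 1, x ≠ 0 := by
    rw [Set.uIcc_of_le ht']
    intro x hx
    exact (lt_of_lt_of_le ht hx.1).ne'
  have hderiv : ∀ x ∈ Set.uIcc t 1,
      HasDerivAt (fun x => t * (Real.log x - Real.log t) ^ (l + 1) / Nat.factorial (l + 1))
        ((t / x) * ((Real.log x - Real.log t) ^ l / Nat.factorial l)) x := by
    intro x hx
    have hx0 : x ≠ 0 := hne x hx
    have h1 : HasDerivAt (fun x : ℝ => Real.log x - Real.log t) x⁻¹ x :=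
      (Real.hasDerivAt_log hx0).sub_const _
    have h2 := h1.pow (l + 1)
    have h3 := (h2.const_mul t).div_const (Nat.factorial (l + 1) : ℝ)
    convert h3 using 1
    · rfl
    · rfl
    · rfl
    rw [Nat.add_sub_cancel, Nat.factorial_succ]
    have hfl : (Nat.factorial l : ℝ) ≠ 0 := Nat.cast_ne_zero.mpr (Nat.factorial_ne_zero l)
    push_cast
    field_simp
  have hcont : ContinuousOn
      (fun x => (t / x) * ((Real.log x - Real.log t) ^ l / Nat.factorial l))
      (Set.uIcc t 1) := by
    have hsub : Set.uIcc t 1 ⊆ {(0:ℝ)}ᶜ := fun x hx => hne x hx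
    exact (continuousOn_const.div continuousOn_id hne).mul
      ((((Real.continuousOn_log.mono hsub).sub continuousOn_const).pow l).div_const _)
  rw [intervalIntegral.integral_eq_sub_of_hasDerivAt hderiv hcont.intervalIntegrable]
  rw [Real.log_one, Real.log_inv]
  ring_nf

lemma mainCalc : ∀ d : ℕ, ∀ t : ℝ, 0 < t → t ≤ 1 →
    Measure.pi (fun _ : Fin d => volume.restrict (Set.Ioc 0 1))
        {y : Fin d → ℝ | ∏ j, y j < t}
      = ENNReal.ofReal (t * ∑ l ∈ Finset.range d, Real.log t⁻¹ ^ l / Nat.factorial l) := by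
  intro d
  induction d with
  | zero =>
    intro t ht ht'
    have h : {y : Fin 0 → ℝ | ∏ j, y j < t} = ∅ := by
      ext y; simp [ht'.not_gt]
    rw [h]; simp
  | succ d ih =>
    intro t ht ht'
    have hmp : ∀ n : ℕ, Measurable (fun y : Fin n → ℝ => ∏ j, y j) := fun n =>
      Finset.measurable_prod _ fun i _ => measurable_pi_apply i
    have hA : MeasurableSet {p : ℝ × (Fin d → ℝ) | p.1 * ∏ j, p.2 j < t} :=
      measurableSet_lt (measurable_fst.mul ((hmp d).comp measurable_snd)) measurable_const
    have MP := measurePreserving_piFinSuccAbove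
      (fun _ : Fin (d + 1) => (volume.restrict (Set.Ioc (0:ℝ) 1))) 0
    have hSA : {y : Fin (d + 1) → ℝ | ∏ j, y j < t}
        = (MeasurableEquiv.piFinSuccAbove (fun _ : Fin (d + 1) => ℝ) 0) ⁻¹'
          {p : ℝ × (Fin d → ℝ) | p.1 * ∏ j, p.2 j < t} := by
      ext x
      simp only [Set.mem_setOf_eq, Set.mem_preimage, MeasurableEquiv.piFinSuccAbove_apply,
        Fin.insertNthEquiv_symm_apply, Fin.removeNth]
      rw [Fin.prod_univ_succAbove x 0]
    set μd := Measure.pi (fun _ : Fin d => volume.restrict (Set.Ioc (0:ℝ) 1)) with hμd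
    rw [hSA, MP.measure_preimage hA.nullMeasurableSet, Measure.prod_apply hA]
    have hpre : ∀ x : ℝ, 0 < x → Prod.mk x ⁻¹'
        {p : ℝ × (Fin d → ℝ) | p.1 * ∏ j, p.2 j < t} = {y : Fin d → ℝ | ∏ j, y j < t / x} := by
      intro x hx0
      ext y
      simp only [Set.mem_preimage, Set.mem_setOf_eq]
      rw [lt_div_iff₀ hx0]
      constructor <;> intro h <;> linarith [h]
    have hsplit : volume.restrict (Set.Ioc (0:ℝ) 1)
        = volume.restrict (Set.Ioc 0 t) + volume.restrict (Set.Ioc t 1) := by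
      rw [← Measure.restrict_union (Set.Ioc_disjoint_Ioc_of_le le_rfl) measurableSet_Ioc,
        Set.Ioc_union_Ioc_eq_Ioc ht.le ht']
    rw [hsplit, lintegral_add_measure]
    have part1 : ∫⁻ x in Set.Ioc 0 t,
        μd (Prod.mk x ⁻¹' {p : ℝ × (Fin d → ℝ) | p.1 * ∏ j, p.2 j < t}) ∂volume
        = ENNReal.ofReal t := by
      rw [← Measure.restrict_congr_set Ioo_ae_eq_Ioc]
      have hval : ∀ x ∈ Set.Ioo (0:ℝ) t,
          μd (Prod.mk x ⁻¹' {p : ℝ × (Fin d → ℝ) | p.1 * ∏ j, p.2 j < t}) = 1 := by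
        intro x hx
        rw [hpre x hx.1]
        exact fullMeasure d ((one_lt_div hx.1).mpr hx.2)
      rw [setLIntegral_congr_fun measurableSet_Ioo hval, setLIntegral_one,
        Real.volume_Ioo]
      norm_num
    have part2 : ∫⁻ x in Set.Ioc t 1,
        μd (Prod.mk x ⁻¹' {p : ℝ × (Fin d → ℝ) | p.1 * ∏ j, p.2 j < t}) ∂volume
        = ENNReal.ofReal (∑ l ∈ Finset.range d,
            t * Real.log t⁻¹ ^ (l + 1) / Nat.factorial (l + 1)) := by
      have hval : ∀ x ∈ Set.Ioc t 1,
          μd (Prod.mk x ⁻¹' {p : ℝ × (Fin d → ℝ) | p.1 * ∏ j, p.2 j < t})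
            = ENNReal.ofReal ((t / x) *
                ∑ l ∈ Finset.range d, Real.log (t / x)⁻¹ ^ l / Nat.factorial l) := by
        intro x hx
        have hx0 : 0 < x := ht.trans hx.1
        rw [hpre x hx0]
        exact ih (t / x) (div_pos ht hx0) ((div_le_one hx0).mpr hx.1.le)
      rw [setLIntegral_congr_fun measurableSet_Ioc hval]
      have hne : ∀ x ∈ Set.Icc t 1, x ≠ 0 := fun x hx => (lt_of_lt_of_le ht hx.1).ne'
      have hcont : ContinuousOn (fun x => (t / x) *
          ∑ l ∈ Finset.range d, Real.log (t / x)⁻¹ ^ l / Nat.factorial l) (Set.Icc t 1) := by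
        have hd : ContinuousOn (fun x : ℝ => t / x) (Set.Icc t 1) :=
          continuousOn_const.div continuousOn_id hne
        have hinv : ContinuousOn (fun x : ℝ => (t / x)⁻¹) (Set.Icc t 1) :=
          hd.inv₀ fun x hx => (div_pos ht (lt_of_lt_of_le ht hx.1)).ne'
        have hlog : ContinuousOn (fun x : ℝ => Real.log (t / x)⁻¹) (Set.Icc t 1) :=
          hinv.log fun x hx => (inv_ne_zero (div_pos ht (lt_of_lt_of_le ht hx.1)).ne')
        exact hd.mul (continuousOn_finset_sum _ fun l _ => (hlog.pow l).div_const _)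
      have hInt : IntegrableOn (fun x => (t / x) *
          ∑ l ∈ Finset.range d, Real.log (t / x)⁻¹ ^ l / Nat.factorial l) (Set.Ioc t 1) :=
        (hcont.integrableOn_Icc).mono_set Set.Ioc_subset_Icc_self
      have hnn : 0 ≤ᵐ[volume.restrict (Set.Ioc t 1)] (fun x => (t / x) *
          ∑ l ∈ Finset.range d, Real.log (t / x)⁻¹ ^ l / Nat.factorial l) := by
        refine (ae_restrict_iff' measurableSet_Ioc).mpr (ae_of_all _ fun x hx => ?_)
        have hx0 : 0 < x := ht.trans hx.1
        have h1 : 1 ≤ (t / x)⁻¹ := by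
          rw [one_le_inv_iff₀]
          exact ⟨div_pos ht hx0, (div_le_one hx0).mpr hx.1.le⟩
        refine mul_nonneg (div_nonneg ht.le hx0.le) (Finset.sum_nonneg fun l _ => ?_)
        exact div_nonneg (pow_nonneg (Real.log_nonneg h1) l) (Nat.cast_nonneg _)
      rw [← ofReal_integral_eq_lintegral_ofReal hInt hnn]
      congr 1
      rw [← intervalIntegral.integral_of_le ht']
      have heq : Set.EqOn (fun x => (t / x) *
            ∑ l ∈ Finset.range d, Real.log (t / x)⁻¹ ^ l / Nat.factorial l)
          (fun x => ∑ l ∈ Finset.range d,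
            (t / x) * ((Real.log x - Real.log t) ^ l / Nat.factorial l))
          (Set.uIcc t 1) := by
        intro x hx
        rw [Set.uIcc_of_le ht'] at hx
        have hx0 : 0 < x := lt_of_lt_of_le ht hx.1
        simp only
        rw [Finset.mul_sum]
        refine Finset.sum_congr rfl fun l _ => ?_
        rw [inv_div, Real.log_div hx0.ne' ht.ne']
      rw [intervalIntegral.integral_congr heq]
      have hinteg : ∀ l ∈ Finset.range d, IntervalIntegrable
          (fun x => (t / x) * ((Real.log x - Real.log t) ^ l / Nat.factorial l)) volume t 1 := by
        intro l _
        apply ContinuousOn.intervalIntegrable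
        rw [Set.uIcc_of_le ht']
        exact (continuousOn_const.div continuousOn_id hne).mul
          (((((Real.continuousOn_log.mono fun x hx => hne x hx).sub continuousOn_const).pow
            l).div_const _))
      rw [intervalIntegral.integral_finset_sum hinteg]
      exact Finset.sum_congr rfl fun l _ => integralTerm t ht ht' l
    rw [part1, part2, ← ENNReal.ofReal_add ht.le (Finset.sum_nonneg fun l _ =>
      div_nonneg (mul_nonneg ht.le (pow_nonneg (Real.log_nonneg
        (one_le_inv_iff₀.mpr ⟨ht, ht'⟩)) _)) (Nat.cast_nonneg _))]
    congr 1
    rw [Finset.sum_range_succ', mul_add, Finset.mul_sum]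
    simp only [pow_zero, Nat.factorial_zero, Nat.cast_one, div_one, mul_one]
    rw [add_comm]
    exact congrArg (· + t) (Finset.sum_congr rfl fun l _ => (mul_div_assoc _ _ _))

theorem stmt_16 (d : ℕ) (η : ℝ) (hη : 0 < η) (hη' : η ≤ ((2 : ℝ) ^ d)⁻¹) :
    (volume ({x : Fin d → ℝ | ∀ j, x j ∈ Set.Icc (0 : ℝ) 1} \
        {x : Fin d → ℝ | (∀ j, x j ∈ Set.Icc (0 : ℝ) 1) ∧
          η ≤ ∏ j, min (x j) (1 - x j)})).toReal
      = 2 ^ d * η *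
          ∑ l ∈ Finset.range d, Real.log (((2 : ℝ) ^ d * η)⁻¹) ^ l / (Nat.factorial l) := by
  have h2d : (0:ℝ) < 2 ^ d := by positivity
  set t : ℝ := 2 ^ d * η with htdef
  have ht : 0 < t := by positivity
  have ht' : t ≤ 1 := by
    have := mul_le_mul_of_nonneg_left hη' h2d.le
    rwa [mul_inv_cancel₀ h2d.ne'] at this
  have hdiff : {x : Fin d → ℝ | ∀ j, x j ∈ Set.Icc (0 : ℝ) 1} \
      {x : Fin d → ℝ | (∀ j, x j ∈ Set.Icc (0 : ℝ) 1) ∧ η ≤ ∏ j, min (x j) (1 - x j)}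
      = {x : Fin d → ℝ | ∏ j, min (x j) (1 - x j) < η} ∩
        (Set.pi Set.univ fun _ : Fin d => Set.Icc (0:ℝ) 1) := by
    ext x
    simp only [Set.mem_diff, Set.mem_setOf_eq, Set.mem_inter_iff, Set.mem_univ_pi, not_and,
      not_le]
    constructor
    · rintro ⟨h1, h2⟩; exact ⟨h2 h1, h1⟩
    · rintro ⟨h1, h2⟩; exact ⟨h2, fun _ => h1⟩
  rw [hdiff, ← Measure.restrict_apply' (MeasurableSet.univ_pi fun _ => measurableSet_Icc),
    piRestrict d measurableSet_Icc]
  have hIoc : (Measure.pi fun _ : Fin d => volume.restrict (Set.Icc (0:ℝ) 1))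
      = Measure.pi fun _ : Fin d => volume.restrict (Set.Ioc (0:ℝ) 1) := by
    congr 1
    funext _
    exact (Measure.restrict_congr_set Ioc_ae_eq_Icc).symm
  rw [hIoc]
  have hprods : {x : Fin d → ℝ | ∏ j, min (x j) (1 - x j) < η}
      = (fun (a : Fin d → ℝ) (i : Fin d) => 2 * min (a i) (1 - a i)) ⁻¹'
        {y : Fin d → ℝ | ∏ j, y j < t} := by
    ext x
    simp only [Set.mem_setOf_eq, Set.mem_preimage]
    rw [Finset.prod_mul_distrib, Finset.prod_const, Finset.card_univ, Fintype.card_fin,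
      htdef, mul_lt_mul_iff_right₀ h2d]
  have MP := measurePreserving_pi (fun _ : Fin d => volume.restrict (Set.Ioc (0:ℝ) 1))
    (fun _ : Fin d => volume.restrict (Set.Ioc (0:ℝ) 1)) (fun _ => tentMP)
  have hmeas : MeasurableSet {y : Fin d → ℝ | ∏ j, y j < t} :=
    measurableSet_lt (Finset.measurable_prod _ fun i _ => measurable_pi_apply i)
      measurable_const
  rw [hprods, MP.measure_preimage hmeas.nullMeasurableSet, mainCalc d t ht ht']
  rw [ENNReal.toReal_ofReal, mul_assoc]
  refine mul_nonneg ht.le (Finset.sum_nonneg fun l _ => div_nonneg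
    (pow_nonneg (Real.log_nonneg (one_le_inv_iff₀.mpr ⟨ht, ht'⟩)) l) (Nat.cast_nonneg _))
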